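/- Let θ satisfy condition (A) and let φ be the quotient substitution on B = {0,…,n−1}. Then the heights coincide: m(θ) = m(φ), where m(φ) is defined analogously using a bi-infinite fixed point of φ whose 0th letter is the letter 0 ∈ B. -/

import Mathlib

open Set Topology

/-! ### Ellis semigroup of a dynamical system -/

section Ellis

variable {X : Type*} [TopologicalSpace X]

/-- The Ellis (enveloping) semigroup of a dynamical system `(X, T)`: the closure of
`{T^n : n ∈ ℤ}` in `X → X` with the topology of pointwise convergence. -/
def ellisSemigroup (T : X ≃ₜ X) : Set (X → X) :=
  closure {f : X → X | ∃ n : ℤ, f = ⇑(T.toEquiv ^ n)}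

/-- A (left) ideal of the Ellis semigroup. -/
def IsLeftIdealOf (T : X ≃ₜ X) (I : Set (X → X)) : Prop :=
  I.Nonempty ∧ I ⊆ ellisSemigroup T ∧ ∀ p ∈ ellisSemigroup T, ∀ q ∈ I, p ∘ q ∈ I

/-- A minimal left ideal of the Ellis semigroup. -/
def IsMinimalLeftIdealOf (T : X ≃ₜ X) (I : Set (X → X)) : Prop :=
  IsLeftIdealOf T I ∧ ∀ J, IsLeftIdealOf T J → J ⊆ I → J = I

/-- Two points are proximal iff some element of the Ellis semigroup identifies them. -/
def ProximalIn (T : X ≃ₜ X) (x y : X) : Prop :=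
  ∃ p ∈ ellisSemigroup T, p x = p y

end Ellis

/-! ### The shift on bi-infinite sequences and orbit closures -/

section Shift

variable {A : Type*}

/-- The shift map on bi-infinite sequences. -/
def shiftF (A : Type*) : (ℤ → A) → (ℤ → A) := fun x n => x (n + 1)

/-- The inverse shift map on bi-infinite sequences. -/
def shiftFInv (A : Type*) : (ℤ → A) → (ℤ → A) := fun x n => x (n - 1)

variable [TopologicalSpace A]

/-- The shift-orbit closure of a bi-infinite sequence. -/
def orbitClosure (x : ℤ → A) : Set (ℤ → A) :=
  closure {y | ∃ n : ℤ, y = fun k => x (k + n)}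

lemma self_mem_orbitClosure (x : ℤ → A) : x ∈ orbitClosure x :=
  subset_closure ⟨0, by funext k; simp⟩

lemma shiftF_mem_orbitClosure (x : ℤ → A) {y : ℤ → A} (hy : y ∈ orbitClosure x) :
    shiftF A y ∈ orbitClosure x := by
  have hc : Continuous (shiftF A) := continuous_pi fun n => continuous_apply (n + 1)
  have h1 := image_closure_subset_closure_image
    (s := {y : ℤ → A | ∃ n : ℤ, y = fun k => x (k + n)}) hc (mem_image_of_mem _ hy)
  refine closure_mono ?_ h1
  rintro _ ⟨z, ⟨n, rfl⟩, rfl⟩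
  refine ⟨n + 1, ?_⟩
  funext k
  show x (k + 1 + n) = x (k + (n + 1))
  congr 1; ring

lemma shiftFInv_mem_orbitClosure (x : ℤ → A) {y : ℤ → A} (hy : y ∈ orbitClosure x) :
    shiftFInv A y ∈ orbitClosure x := by
  have hc : Continuous (shiftFInv A) := continuous_pi fun n => continuous_apply (n - 1)
  have h1 := image_closure_subset_closure_image
    (s := {y : ℤ → A | ∃ n : ℤ, y = fun k => x (k + n)}) hc (mem_image_of_mem _ hy)
  refine closure_mono ?_ h1
  rintro _ ⟨z, ⟨n, rfl⟩, rfl⟩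
  refine ⟨n - 1, ?_⟩
  funext k
  show x (k - 1 + n) = x (k + (n - 1))
  congr 1; ring

/-- The shift, as a homeomorphism of the orbit closure of `x`. -/
def shiftHomOn (x : ℤ → A) : (orbitClosure x) ≃ₜ (orbitClosure x) where
  toFun y := ⟨shiftF A y.1, shiftF_mem_orbitClosure x y.2⟩
  invFun y := ⟨shiftFInv A y.1, shiftFInv_mem_orbitClosure x y.2⟩
  left_inv y := by
    apply Subtype.ext; funext k
    show y.1 (k - 1 + 1) = y.1 k
    congr 1; ring
  right_inv y := by
    apply Subtype.ext; funext k
    show y.1 (k + 1 - 1) = y.1 k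
    congr 1; ring
  continuous_toFun := Continuous.subtype_mk
    ((continuous_pi fun n => continuous_apply (n + 1)).comp continuous_subtype_val) _
  continuous_invFun := Continuous.subtype_mk
    ((continuous_pi fun n => continuous_apply (n - 1)).comp continuous_subtype_val) _

/-- The set of legal two-letter words of a subshift `Xs`. -/
def legalPairs (Xs : Set (ℤ → A)) : Set (A × A) :=
  {ab | ∃ y ∈ Xs, ∃ i : ℤ, y i = ab.1 ∧ y (i + 1) = ab.2}

end Shift

/-! ### Substitutions of constant length -/

section Subst

variable {na r : ℕ} [NeZero na] [NeZero r]

/-- `wordIter θ k a j` is the `j`-th letter of the word `θ^k(a)` (of length `r^k`). -/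
def wordIter (θ : Fin na → Fin r → Fin na) : ℕ → Fin na → ℕ → Fin na
  | 0, a, _ => a
  | k+1, a, j => wordIter θ k (θ a ⟨(j / r ^ k) % r, Nat.mod_lt _ (NeZero.pos r)⟩) (j % r ^ k)

/-- A bi-infinite fixed point of the substitution `θ`. -/
def IsSubFix (θ : Fin na → Fin r → Fin na) (x : ℤ → Fin na) : Prop :=
  ∀ (n : ℤ) (m : Fin r), x (r * n + (m : ℕ)) = θ (x n) m

/-- `θ` is admissible: injective on letters and with non-periodic fixed points. -/
def AdmissibleSub (θ : Fin na → Fin r → Fin na) : Prop :=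
  Function.Injective θ ∧
  ∀ x : ℤ → Fin na, IsSubFix θ x → ∀ p : ℤ, p ≠ 0 → ∃ k : ℤ, x (k + p) ≠ x k

/-- `θ` is primitive: some power of `θ` maps any letter to a word containing all letters. -/
def PrimitiveSub (θ : Fin na → Fin r → Fin na) : Prop :=
  ∃ k : ℕ, ∀ a b : Fin na, ∃ j < r ^ k, wordIter θ k a j = b

/-- `θ` is coincidence-free. -/
def CoincidenceFreeSub (θ : Fin na → Fin r → Fin na) : Prop :=
  ∀ a b : Fin na, a ≠ b → ∀ m : Fin r, θ a m ≠ θ b m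

/-- `θ` is in canonical form: `θ(a)` begins and ends with `a`. -/
def CanonicalFormSub (θ : Fin na → Fin r → Fin na) : Prop :=
  ∀ a, θ a ⟨0, NeZero.pos r⟩ = a ∧ θ a ⟨r - 1, Nat.sub_lt (NeZero.pos r) one_pos⟩ = a

/-- `HeightData θ xh d m` : `xh` is a bi-infinite fixed point of `θ` with `xh 0 = 0`,
`d` is the gcd of the set `M = {n ≥ 1 : xh n = 0}` of positive occurrences of `0`,
and `m` is the height `m(θ)`: the largest divisor of `d` coprime to `r`. -/
def HeightData (θ : Fin na → Fin r → Fin na) (xh : ℤ → Fin na) (d m : ℕ) : Prop :=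
  IsSubFix θ xh ∧ xh 0 = 0 ∧
  (∀ k : ℕ, 1 ≤ k → xh (k : ℤ) = 0 → d ∣ k) ∧
  (∀ e : ℕ, (∀ k : ℕ, 1 ≤ k → xh (k : ℤ) = 0 → e ∣ k) → e ∣ d) ∧
  0 < m ∧ m ∣ d ∧ Nat.Coprime m r ∧
  ∀ m' : ℕ, m' ∣ d → Nat.Coprime m' r → m' ∣ m

/-- `z(i) = (min {n : θ(i)_n = 0}) mod m`. -/
noncomputable def subZ (θ : Fin na → Fin r → Fin na) (m : ℕ) (i : Fin na) : ℕ :=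
  sInf {n : ℕ | ∃ h : n < r, θ i ⟨n, h⟩ = 0} % m

/-- The class `S_p = {i : z(i) ≡ -p (mod m)}`. -/
def subS (θ : Fin na → Fin r → Fin na) (m : ℕ) (p : ℕ) : Set (Fin na) :=
  {i | Int.ModEq (m : ℤ) (subZ θ m i : ℤ) (-(p : ℤ))}

/-- The set `P(i,j,k) = {θ^k(p)[j, j+1] : p ∈ S_i}`. -/
def subP (θ : Fin na → Fin r → Fin na) (m : ℕ) (i j k : ℕ) : Set (Fin na × Fin na) :=
  {ab | ∃ p ∈ subS θ m i, ab = (wordIter θ k p j, wordIter θ k p (j + 1))}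

/-- The collection of all classes `P(i,j,k)` for `i < m(θ)`, `k ≥ 1`, `0 ≤ j ≤ r^k - 2`. -/
def subClasses (θ : Fin na → Fin r → Fin na) (m : ℕ) : Set (Set (Fin na × Fin na)) :=
  {P | ∃ i < m, ∃ k, 1 ≤ k ∧ ∃ j, j + 2 ≤ r ^ k ∧ P = subP θ m i j k}

/-- Condition (A): the collection of the `P(i,j,k)` is a partition of the set of legal
two-letter words. -/
def subCondA (θ : Fin na → Fin r → Fin na) (m : ℕ) (Xs : Set (ℤ → Fin na)) : Prop :=
  (∀ C ∈ subClasses θ m, C.Nonempty) ∧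
  (⋃₀ subClasses θ m = legalPairs Xs) ∧
  ∀ C ∈ subClasses θ m, ∀ D ∈ subClasses θ m, C = D ∨ Disjoint C D

/-- Data of the quotient substitution `φ` on the alphabet `B = Fin n` of classes:
`c` is the labelling of legal two-letter words by their classes (with the class of words
whose last letter lies in `S_0` labelled `0`), and `φ(b)_0 = b`,
`φ(b)_h = [θ(a_b)[h-1,h]]` for `1 ≤ h ≤ r-1`, where `a_b` is any last letter of a word
in class `b`. -/
def QuotientSubData {n : ℕ} [NeZero n] (θ : Fin na → Fin r → Fin na) (m : ℕ)
    (Xs : Set (ℤ → Fin na)) (c : Fin na × Fin na → Fin n)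
    (φ : Fin n → Fin r → Fin n) : Prop :=
  (∀ b : Fin n, ∃ ab ∈ legalPairs Xs, c ab = b) ∧
  (∀ ab ∈ legalPairs Xs, ∀ cd ∈ legalPairs Xs,
    (c ab = c cd ↔ ∃ C ∈ subClasses θ m, ab ∈ C ∧ cd ∈ C)) ∧
  (∀ ab ∈ legalPairs Xs, c ab = ⟨0, NeZero.pos n⟩ → ab.2 ∈ subS θ m 0) ∧
  (∀ b : Fin n, φ b ⟨0, NeZero.pos r⟩ = b) ∧
  ∀ b : Fin n, ∀ ab ∈ legalPairs Xs, c ab = b →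
    ∀ (h : ℕ) (_ : 1 ≤ h) (hh : h < r),
      φ b ⟨h, hh⟩ = c (θ ab.2 ⟨h - 1, lt_of_le_of_lt (Nat.sub_le h 1) hh⟩, θ ab.2 ⟨h, hh⟩)

/-- The `i`-th column set `C_i = {φ(b)_i : b ∈ B}` of a substitution `φ`. -/
def colSet {n : ℕ} (φ : Fin n → Fin r → Fin n) (i : ℕ) (hi : i < r) : Set (Fin n) :=
  {b' | ∃ b, φ b ⟨i, hi⟩ = b'}

/-- The number `q` of distinct column sets `C_1, …, C_{r-1}` of `φ`. -/
noncomputable def numColSets {n : ℕ} (φ : Fin n → Fin r → Fin n) : ℕ :=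
  {C : Set (Fin n) | ∃ i, ∃ hi : i < r, 1 ≤ i ∧ C = colSet φ i hi}.ncard

/-- The 2-block sliding block code induced by a block map `c`. -/
def PsiMap {A B : Type*} (c : A × A → B) (x : ℤ → A) : ℤ → B :=
  fun i => c (x (i - 1), x i)

end Subst

/-! ### IP sets and IP cluster points -/

/-- A subset of `ℤ` is an IP set if it is the set of finite sums of a sequence of
distinct integers. -/
def IsIPSet (Q : Set ℤ) : Prop :=
  ∃ g : ℕ → ℤ, Function.Injective g ∧
    Q = {s | ∃ F : Finset ℕ, F.Nonempty ∧ s = ∑ i ∈ F, g i}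

/-- `f` is an IP cluster point of the system `(X,T)` along the IP set `P`. -/
def IsIPCP {X : Type*} [TopologicalSpace X] (T : X ≃ₜ X) (f : X → X) (P : Set ℤ) : Prop :=
  ∀ U ∈ nhds f, ∃ Q : Set ℤ, IsIPSet Q ∧ Q ⊆ {k ∈ P | ⇑(T.toEquiv ^ k) ∈ U}

/-! ### Auxiliary lemmas for Statement 7 -/

section Stmt7Aux

lemma aux_wordIter_succ {na r : ℕ} [NeZero na] [NeZero r]
    (η : Fin na → Fin r → Fin na) (K : ℕ) (a : Fin na) (j : ℕ) :
    wordIter η (K + 1) a j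
      = wordIter η K (η a ⟨(j / r ^ K) % r, Nat.mod_lt _ (NeZero.pos r)⟩) (j % r ^ K) := rfl

lemma aux_int_eq_zero {M a : ℤ} (hM : 0 < M) (h : M ∣ a) (h1 : -M < a) (h2 : a < M) :
    a = 0 := by
  rcases h with ⟨t, rfl⟩
  rcases lt_trichotomy t 0 with ht | ht | ht
  · have : t ≤ -1 := by omega
    nlinarith
  · simp [ht]
  · have : 1 ≤ t := by omega
    nlinarith

lemma aux_expand {na r : ℕ} [NeZero na] [NeZero r]
    (η : Fin na → Fin r → Fin na) (x : ℤ → Fin na) (hx : IsSubFix η x) :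
    ∀ (K : ℕ) (nn : ℤ) (j : ℕ), j < r ^ K →
      x ((r : ℤ) ^ K * nn + (j : ℤ)) = wordIter η K (x nn) j := by
  intro K
  induction K with
  | zero =>
      intro nn j hj
      simp only [pow_zero] at hj
      have hj0 : j = 0 := by omega
      subst hj0
      simp [wordIter]
  | succ K ih =>
      intro nn j hj
      have hrpos : 0 < r := NeZero.pos r
      have hpK : 0 < r ^ K := pow_pos hrpos K
      have hqr : j / r ^ K < r := by
        rw [Nat.div_lt_iff_lt_mul hpK]
        calc j < r ^ (K + 1) := hj
          _ = r * r ^ K := by rw [pow_succ]; ring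
      have hds : r ^ K * (j / r ^ K) + j % r ^ K = j := Nat.div_add_mod j (r ^ K)
      have hcast : (j : ℤ) = (r : ℤ) ^ K * ((j / r ^ K : ℕ) : ℤ) + ((j % r ^ K : ℕ) : ℤ) := by
        exact_mod_cast congrArg (Nat.cast : ℕ → ℤ) hds.symm
      have hpos : (r : ℤ) ^ (K + 1) * nn + (j : ℤ)
          = (r : ℤ) ^ K * ((r : ℤ) * nn + ((j / r ^ K : ℕ) : ℤ)) + ((j % r ^ K : ℕ) : ℤ) := by
        rw [hcast]; ring
      rw [hpos, ih ((r : ℤ) * nn + ((j / r ^ K : ℕ) : ℤ)) (j % r ^ K) (Nat.mod_lt _ hpK)]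
      have hstep : x ((r : ℤ) * nn + ((j / r ^ K : ℕ) : ℤ)) = η (x nn) ⟨j / r ^ K, hqr⟩ := by
        have h := hx nn ⟨j / r ^ K, hqr⟩
        simpa using h
      rw [hstep, aux_wordIter_succ]
      have hfin : (⟨(j / r ^ K) % r, Nat.mod_lt _ (NeZero.pos r)⟩ : Fin r)
          = ⟨j / r ^ K, hqr⟩ := Fin.ext (Nat.mod_eq_of_lt hqr)
      rw [hfin]

lemma aux_wordIter_zero {na r : ℕ} [NeZero na] [NeZero r]
    (η : Fin na → Fin r → Fin na) (h0 : ∀ a, η a ⟨0, NeZero.pos r⟩ = a) :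
    ∀ (K : ℕ) (a : Fin na), wordIter η K a 0 = a := by
  intro K
  induction K with
  | zero => intro a; rfl
  | succ K ih =>
      intro a
      rw [aux_wordIter_succ]
      simp only [Nat.zero_div, Nat.zero_mod]
      rw [ih]
      exact h0 a

lemma aux_wordIter_last {na r : ℕ} [NeZero na] [NeZero r]
    (θ : Fin na → Fin r → Fin na) (hcan : CanonicalFormSub θ) :
    ∀ (K : ℕ) (a : Fin na), wordIter θ K a (r ^ K - 1) = a := by
  intro K
  induction K with
  | zero => intro a; simp [wordIter]
  | succ K ih =>
      intro a
      have hrpos : 0 < r := NeZero.pos r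
      have hpK : 0 < r ^ K := pow_pos hrpos K
      have hle : r ^ K ≤ r ^ (K + 1) := Nat.pow_le_pow_right hrpos (Nat.le_succ K)
      have h3 : r ^ K * (r - 1) = r ^ (K + 1) - r ^ K := by
        rw [Nat.mul_sub, mul_one, ← pow_succ]
      have e : r ^ (K + 1) - 1 = (r ^ K - 1) + r ^ K * (r - 1) := by
        rw [h3]; omega
      have hdiv : (r ^ (K + 1) - 1) / r ^ K = r - 1 := by
        rw [e, Nat.add_mul_div_left _ _ hpK, Nat.div_eq_of_lt (by omega)]
        omega
      have hmod : (r ^ (K + 1) - 1) % r ^ K = r ^ K - 1 := by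
        rw [e, Nat.add_mul_mod_self_left, Nat.mod_eq_of_lt (by omega)]
      rw [aux_wordIter_succ]
      have hr1 : r - 1 < r := by omega
      have hfin : (⟨(r ^ (K + 1) - 1) / r ^ K % r, Nat.mod_lt _ (NeZero.pos r)⟩ : Fin r)
          = ⟨r - 1, hr1⟩ := Fin.ext (by rw [hdiv]; exact Nat.mod_eq_of_lt hr1)
      rw [hfin, hmod, ih]
      exact (hcan a).2

lemma aux_zero_mem_S0 {na r : ℕ} [NeZero na] [NeZero r]
    (θ : Fin na → Fin r → Fin na) (hcan : CanonicalFormSub θ) (m : ℕ) :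
    (0 : Fin na) ∈ subS θ m 0 := by
  have h0 : subZ θ m (0 : Fin na) = 0 := by
    unfold subZ
    have : sInf {t : ℕ | ∃ h : t < r, θ 0 ⟨t, h⟩ = 0} = 0 :=
      Nat.sInf_eq_zero.mpr (Or.inl ⟨NeZero.pos r, (hcan 0).1⟩)
    rw [this, Nat.zero_mod]
  show Int.ModEq _ _ _
  rw [h0]
  simp [Int.ModEq.refl]



lemma aux_MC {na r n : ℕ} [NeZero na] [NeZero r] [NeZero n]
    (θ : Fin na → Fin r → Fin na) (hcan : CanonicalFormSub θ)
    (xh : ℤ → Fin na) (hfix : IsSubFix θ xh)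
    (m : ℕ) (c : Fin na × Fin na → Fin n) (φ : Fin n → Fin r → Fin n)
    (hq : QuotientSubData θ m (orbitClosure xh) c φ) :
    ∀ (K : ℕ) (b : Fin n) (ab : Fin na × Fin na),
      ab ∈ legalPairs (orbitClosure xh) → c ab = b →
      ∀ (w : ℤ), xh w = ab.2 → ∀ k : ℕ, 1 ≤ k → k < r ^ K →
      wordIter φ K b k
        = c (xh ((r : ℤ) ^ K * w + (k : ℤ) - 1), xh ((r : ℤ) ^ K * w + (k : ℤ))) := by
  obtain ⟨hq1, hq2, hq3, hq4, hq5⟩ := hq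
  intro K
  induction K with
  | zero =>
      intro _ _ _ _ _ _ k hk1 hk2
      simp only [pow_zero] at hk2
      omega
  | succ K ih =>
      intro b ab hab hcb w hw k hk1 hk2
      have hrpos : 0 < r := NeZero.pos r
      have hpK : 0 < r ^ K := pow_pos hrpos K
      have hqr : k / r ^ K < r := by
        rw [Nat.div_lt_iff_lt_mul hpK]
        calc k < r ^ (K + 1) := hk2
          _ = r * r ^ K := by rw [pow_succ]; ring
      set q := k / r ^ K with hqdef
      set s := k % r ^ K with hsdef
      have hsK : s < r ^ K := Nat.mod_lt _ hpK
      have hds : r ^ K * q + s = k := Nat.div_add_mod k (r ^ K)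
      have hfinq : (⟨(k / r ^ K) % r, Nat.mod_lt _ (NeZero.pos r)⟩ : Fin r) = ⟨q, hqr⟩ :=
        Fin.ext (Nat.mod_eq_of_lt hqr)
      have hunfold : wordIter φ (K + 1) b k = wordIter φ K (φ b ⟨q, hqr⟩) s := by
        rw [aux_wordIter_succ, hfinq]
      rcases Nat.eq_zero_or_pos q with hq0 | hq1
      · -- q = 0, so k = s < r^K
        have hks : k = s := by
          rw [hq0, mul_zero, zero_add] at hds; omega
        have hx' : xh ((r : ℤ) * w) = ab.2 := by
          have h := hfix w ⟨0, hrpos⟩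
          simp only [Fin.val_mk, Nat.cast_zero, add_zero] at h
          rw [h, hw]
          exact (hcan ab.2).1
        have ihres := ih b ab hab hcb ((r : ℤ) * w) hx' k hk1 (by omega)
        have hb0 : φ b ⟨q, hqr⟩ = b := by
          have hfin0 : (⟨q, hqr⟩ : Fin r) = ⟨0, NeZero.pos r⟩ := Fin.ext hq0
          rw [hfin0]
          exact hq4 b
        have hpos1 : (r : ℤ) ^ K * ((r : ℤ) * w) + (k : ℤ) - 1
            = (r : ℤ) ^ (K + 1) * w + (k : ℤ) - 1 := by ring
        have hpos2 : (r : ℤ) ^ K * ((r : ℤ) * w) + (k : ℤ)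
            = (r : ℤ) ^ (K + 1) * w + (k : ℤ) := by ring
        rw [hpos1, hpos2] at ihres
        rw [hunfold, ← hks, hb0, ihres]
      · -- q ≥ 1
        have hq1r : q - 1 < r := by omega
        have hq5' := hq5 b ab hab hcb q hq1 hqr
        have hv1 : xh ((r : ℤ) * w + ((q : ℤ) - 1)) = θ ab.2 ⟨q - 1, hq1r⟩ := by
          have h := hfix w ⟨q - 1, hq1r⟩
          rw [hw] at h
          have hc : (((q - 1 : ℕ) : ℤ)) = (q : ℤ) - 1 := by omega
          simp only [Fin.val_mk] at h
          rw [hc] at h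
          exact h
        have hv2 : xh ((r : ℤ) * w + (q : ℤ)) = θ ab.2 ⟨q, hqr⟩ := by
          have h := hfix w ⟨q, hqr⟩
          rw [hw] at h
          simpa using h
        rcases Nat.eq_zero_or_pos s with hs0 | hs1
        · -- s = 0 : k = q * r^K
          have hkval : (k : ℤ) = (r : ℤ) ^ K * (q : ℤ) := by
            have : r ^ K * q = k := by omega
            exact_mod_cast this.symm
          have hBval : xh ((r : ℤ) ^ (K + 1) * w + (k : ℤ)) = θ ab.2 ⟨q, hqr⟩ := by
            have e : (r : ℤ) ^ (K + 1) * w + (k : ℤ)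
                = (r : ℤ) ^ K * ((r : ℤ) * w + (q : ℤ)) + ((0 : ℕ) : ℤ) := by
              rw [hkval]; push_cast; ring
            rw [e, aux_expand θ xh hfix K _ 0 hpK]
            rw [aux_wordIter_zero θ (fun a => (hcan a).1) K]
            exact hv2
          have hAval : xh ((r : ℤ) ^ (K + 1) * w + (k : ℤ) - 1) = θ ab.2 ⟨q - 1, hq1r⟩ := by
            have hcastK : (((r ^ K - 1 : ℕ)) : ℤ) = (r : ℤ) ^ K - 1 := by
              have : (1 : ℕ) ≤ r ^ K := hpK
              push_cast [Nat.cast_sub this]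
              ring
            have hcq : (((q - 1 : ℕ)) : ℤ) = (q : ℤ) - 1 := by omega
            have e : (r : ℤ) ^ (K + 1) * w + (k : ℤ) - 1
                = (r : ℤ) ^ K * ((r : ℤ) * w + (((q - 1 : ℕ)) : ℤ)) + (((r ^ K - 1 : ℕ)) : ℤ) := by
              rw [hkval, hcastK, hcq]; push_cast; ring
            rw [e, aux_expand θ xh hfix K _ (r ^ K - 1) (by omega)]
            rw [aux_wordIter_last θ hcan K]
            rw [hcq]
            exact hv1
          rw [hunfold, hs0, aux_wordIter_zero φ hq4 K, hq5', hAval, hBval]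
        · -- s ≥ 1
          have hab' : (θ ab.2 ⟨q - 1, hq1r⟩, θ ab.2 ⟨q, hqr⟩) ∈ legalPairs (orbitClosure xh) := by
            refine ⟨xh, self_mem_orbitClosure xh, (r : ℤ) * w + ((q : ℤ) - 1), hv1, ?_⟩
            have e : ((r : ℤ) * w + ((q : ℤ) - 1)) + 1 = (r : ℤ) * w + (q : ℤ) := by ring
            rw [e]
            exact hv2
          have hcb' : c (θ ab.2 ⟨q - 1, hq1r⟩, θ ab.2 ⟨q, hqr⟩) = φ b ⟨q, hqr⟩ := hq5'.symm
          have ihres := ih (φ b ⟨q, hqr⟩) (θ ab.2 ⟨q - 1, hq1r⟩, θ ab.2 ⟨q, hqr⟩)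
            hab' hcb' ((r : ℤ) * w + (q : ℤ)) hv2 s hs1 hsK
          have hkcast : (k : ℤ) = (r : ℤ) ^ K * (q : ℤ) + (s : ℤ) := by
            exact_mod_cast congrArg (Nat.cast : ℕ → ℤ) hds.symm
          have hpos1 : (r : ℤ) ^ K * ((r : ℤ) * w + (q : ℤ)) + (s : ℤ) - 1
              = (r : ℤ) ^ (K + 1) * w + (k : ℤ) - 1 := by rw [hkcast]; ring
          have hpos2 : (r : ℤ) ^ K * ((r : ℤ) * w + (q : ℤ)) + (s : ℤ)
              = (r : ℤ) ^ (K + 1) * w + (k : ℤ) := by rw [hkcast]; ring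
          rw [hpos1, hpos2] at ihres
          rw [hunfold, ihres]

end Stmt7Aux

/-- The heights of `θ` and of the quotient substitution `φ` coincide:
`m(θ) = m(φ)`. -/
theorem stmt_7 {na r : ℕ} [NeZero na] [NeZero r] (hr : 2 ≤ r)
    (θ : Fin na → Fin r → Fin na)
    (hadm : AdmissibleSub θ) (hprim : PrimitiveSub θ) (hcf : CoincidenceFreeSub θ)
    (hcan : CanonicalFormSub θ)
    (xh : ℤ → Fin na) (d m : ℕ) (hht : HeightData θ xh d m)
    (hA : subCondA θ m (orbitClosure xh))
    (n : ℕ) [NeZero n] (c : Fin na × Fin na → Fin n) (φ : Fin n → Fin r → Fin n)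
    (hq : QuotientSubData θ m (orbitClosure xh) c φ)
    (yφ : ℤ → Fin n) (d' m' : ℕ) (hhtφ : HeightData φ yφ d' m') :
    m = m' := by
  obtain ⟨hfixθ, hx0, hd1, hd2, hmpos, hmd, hmr, hmmax⟩ := hht
  obtain ⟨hfixφ, hy0, hd'1, hd'2, hm'pos, hm'd, hm'r, hm'max⟩ := hhtφ
  obtain ⟨hA1, hA2, hA3⟩ := hA
  obtain ⟨hq1, hq2, hq3, hq4, hq5⟩ := id hq
  obtain ⟨kp, hkp⟩ := hprim
  have hrpos : 0 < r := NeZero.pos r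
  have h1r : 1 < r := by omega
  -- every letter occurs in xh at a nonnegative position
  have hocc : ∀ v : Fin na, ∃ nv : ℕ, xh ((nv : ℕ) : ℤ) = v := by
    intro v
    obtain ⟨j, hj, hjv⟩ := hkp 0 v
    refine ⟨j, ?_⟩
    have h := aux_expand θ xh hfixθ kp 0 j hj
    rw [hx0] at h
    rw [show (r : ℤ) ^ kp * 0 + (j : ℤ) = (j : ℤ) by ring] at h
    rw [h, hjv]
  -- m ∣ r - 1
  have hxr1 : xh (((r - 1 : ℕ)) : ℤ) = 0 := by
    have h := hfixθ 0 ⟨r - 1, by omega⟩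
    rw [hx0] at h
    simp only [Fin.val_mk, mul_zero, zero_add] at h
    rw [h]
    exact (hcan 0).2
  have hmr1 : m ∣ r - 1 := dvd_trans hmd (hd1 (r - 1) (by omega) hxr1)
  have hmr1' : (m : ℤ) ∣ (r : ℤ) - 1 := by
    have h := Int.natCast_dvd_natCast.mpr hmr1
    rwa [show (((r - 1 : ℕ)) : ℤ) = (r : ℤ) - 1 by omega] at h
  -- phases are well defined
  have claimA : ∀ (v : Fin na) (n1 n2 : ℕ), xh ((n1 : ℕ) : ℤ) = v → xh ((n2 : ℕ) : ℤ) = v →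
      (m : ℤ) ∣ (n1 : ℤ) - (n2 : ℤ) := by
    intro v n1 n2 h1 h2
    obtain ⟨j, hj, hjv⟩ := hkp v 0
    have hP : ∀ nn : ℕ, xh ((nn : ℕ) : ℤ) = v → (m : ℤ) ∣ (r : ℤ) ^ kp * nn + j := by
      intro nn hnn
      have hx := aux_expand θ xh hfixθ kp (nn : ℤ) j hj
      rw [hnn, hjv] at hx
      have hcastP : ((r ^ kp * nn + j : ℕ) : ℤ) = (r : ℤ) ^ kp * nn + j := by push_cast; ring
      rcases Nat.eq_zero_or_pos (r ^ kp * nn + j) with h0 | hpos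
      · rw [← hcastP, h0]
        simp
      · have hdvd : d ∣ r ^ kp * nn + j := hd1 _ hpos (by rw [hcastP]; exact hx)
        rw [← hcastP]
        exact_mod_cast dvd_trans hmd hdvd
    have hP1 := hP n1 h1
    have hP2 := hP n2 h2
    have hsub : (m : ℤ) ∣ (r : ℤ) ^ kp * n1 - (r : ℤ) ^ kp * n2 := by
      have h := dvd_sub hP1 hP2
      simpa using h
    have hrk : (m : ℤ) ∣ (r : ℤ) ^ kp - 1 := by
      have hme : (r : ℤ) ≡ 1 [ZMOD (m : ℤ)] := Int.modEq_iff_dvd.mpr (dvd_sub_comm.mp hmr1')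
      have h := (hme.pow kp).dvd
      simp only [one_pow] at h
      exact dvd_sub_comm.mp h
    have e : (n1 : ℤ) - n2
        = ((r : ℤ) ^ kp * n1 - (r : ℤ) ^ kp * n2) - ((r : ℤ) ^ kp - 1) * ((n1 : ℤ) - n2) := by
      ring
    rw [e]
    exact dvd_sub hsub (hrk.mul_right _)
  -- letters of S_0 occur only at positions divisible by m (when m ≥ 2)
  have claimB : 2 ≤ m → ∀ v ∈ subS θ m 0, ∀ nn : ℕ, xh ((nn : ℕ) : ℤ) = v →
      (m : ℤ) ∣ (nn : ℤ) := by
    intro hm2 v hv nn hnn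
    have hθ01 : θ 0 ⟨1, h1r⟩ ≠ 0 := by
      intro hcontra
      have hx1 : xh ((1 : ℕ) : ℤ) = 0 := by
        have h := hfixθ 0 ⟨1, h1r⟩
        rw [hx0] at h
        simp only [Fin.val_mk, mul_zero, zero_add, Nat.cast_one] at h
        rw [show ((1 : ℕ) : ℤ) = (1 : ℤ) by norm_num, h]
        exact hcontra
      have hdd := hd1 1 le_rfl hx1
      have h1 := Nat.dvd_one.mp (dvd_trans hmd hdd)
      omega
    have hinj : Function.Injective (fun a : Fin na => θ a ⟨1, h1r⟩) := by
      intro a b hab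
      by_contra hne
      exact hcf a b hne ⟨1, h1r⟩ hab
    obtain ⟨w, hwθ⟩ := Finite.injective_iff_surjective.mp hinj 0
    simp only at hwθ
    have hwne : w ≠ 0 := by
      intro h
      rw [h] at hwθ
      exact hθ01 hwθ
    have hZw : sInf {t : ℕ | ∃ h : t < r, θ w ⟨t, h⟩ = 0} = 1 := by
      have hmem : 1 ∈ {t : ℕ | ∃ h : t < r, θ w ⟨t, h⟩ = 0} := ⟨h1r, hwθ⟩
      have hle := Nat.sInf_le hmem
      have hne0 : sInf {t : ℕ | ∃ h : t < r, θ w ⟨t, h⟩ = 0} ≠ 0 := by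
        intro h0
        have h0mem : 0 ∈ {t : ℕ | ∃ h : t < r, θ w ⟨t, h⟩ = 0} := by
          rw [← h0]
          exact Nat.sInf_mem ⟨1, hmem⟩
        obtain ⟨hh, hth⟩ := h0mem
        apply hwne
        rw [← (hcan w).1]
        exact hth
      omega
    have hzw : subZ θ m w = 1 := by
      unfold subZ
      rw [hZw]
      exact Nat.mod_eq_of_lt hm2
    have hwS : w ∈ subS θ m (m - 1) := by
      show Int.ModEq _ _ _
      rw [hzw]
      rw [show ((1 : ℕ) : ℤ) = (1 : ℤ) by norm_num]
      rw [Int.modEq_iff_dvd]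
      refine ⟨-1, ?_⟩
      omega
    have h0S := aux_zero_mem_S0 θ hcan m
    -- computations of short wordIter values
    have hwi1 : ∀ (a : Fin na) (j : ℕ) (hj : j < r), wordIter θ 1 a j = θ a ⟨j, hj⟩ := by
      intro a j hj
      rw [aux_wordIter_succ]
      have hfin : (⟨(j / r ^ 0) % r, Nat.mod_lt _ (NeZero.pos r)⟩ : Fin r) = ⟨j, hj⟩ :=
        Fin.ext (by simp [Nat.mod_eq_of_lt hj])
      rw [hfin]
      simp [wordIter]
    have hwi2 : ∀ (a : Fin na) (j : ℕ) (hjd : j / r < r) (hjm : j % r < r),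
        wordIter θ 2 a j = θ (θ a ⟨j / r, hjd⟩) ⟨j % r, hjm⟩ := by
      intro a j hjd hjm
      rw [aux_wordIter_succ]
      have hfin : (⟨(j / r ^ 1) % r, Nat.mod_lt _ (NeZero.pos r)⟩ : Fin r) = ⟨j / r, hjd⟩ :=
        Fin.ext (by simp [pow_one, Nat.mod_eq_of_lt hjd])
      rw [hfin]
      rw [show j % r ^ 1 = j % r by rw [pow_one]]
      exact hwi1 _ _ hjm
    have hdr : r / r = 1 := Nat.div_self hrpos
    have hmr0 : r % r = 0 := Nat.mod_self r
    have hdr1 : (r + 1) / r = 1 := by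
      rw [Nat.div_eq_of_lt_le (by omega : 1 * r ≤ r + 1) (by omega : r + 1 < (1 + 1) * r)]
    have hmr1x : (r + 1) % r = 1 := by
      rw [Nat.add_mod_left]
      exact Nat.mod_eq_of_lt h1r
    have hdra : r / r < r := by rw [hdr]; omega
    have hmra : r % r < r := by rw [hmr0]; omega
    have hdr1a : (r + 1) / r < r := by rw [hdr1]; omega
    have hmr1b : (r + 1) % r < r := by rw [hmr1x]; omega
    have hw2a : wordIter θ 2 w r = 0 := by
      rw [hwi2 w r hdra hmra]
      have hf1 : (⟨r / r, hdra⟩ : Fin r) = ⟨1, h1r⟩ := Fin.ext hdr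
      have hf2 : (⟨r % r, hmra⟩ : Fin r) = ⟨0, hrpos⟩ := Fin.ext hmr0
      rw [hf1, hf2, hwθ]
      exact (hcan 0).1
    have hw2b : wordIter θ 2 w (r + 1) = θ 0 ⟨1, h1r⟩ := by
      rw [hwi2 w (r + 1) hdr1a hmr1b]
      have hf1 : (⟨(r + 1) / r, hdr1a⟩ : Fin r) = ⟨1, h1r⟩ := Fin.ext hdr1
      have hf2 : (⟨(r + 1) % r, hmr1b⟩ : Fin r) = ⟨1, h1r⟩ := Fin.ext hmr1x
      rw [hf1, hf2, hwθ]
    -- the two classes containing (0, θ 0 ⟨1⟩)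
    have hC1mem : ((0 : Fin na), θ 0 ⟨1, h1r⟩) ∈ subP θ m 0 0 1 := by
      refine ⟨0, h0S, ?_⟩
      rw [hwi1 0 0 hrpos, hwi1 0 1 h1r, (hcan 0).1]
    have hC2mem : ((0 : Fin na), θ 0 ⟨1, h1r⟩) ∈ subP θ m (m - 1) r 2 := by
      refine ⟨w, hwS, ?_⟩
      rw [hw2a, hw2b]
    have hC1cl : subP θ m 0 0 1 ∈ subClasses θ m :=
      ⟨0, by omega, 1, le_rfl, 0, by rw [pow_one]; omega, rfl⟩
    have hC2cl : subP θ m (m - 1) r 2 ∈ subClasses θ m := by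
      refine ⟨m - 1, by omega, 2, by omega, r, ?_, rfl⟩
      have : r ^ 2 = r * r := sq r
      nlinarith
    have hCeq : subP θ m 0 0 1 = subP θ m (m - 1) r 2 := by
      rcases hA3 _ hC1cl _ hC2cl with h | h
      · exact h
      · exact absurd hC2mem (Set.disjoint_left.mp h hC1mem)
    have hvmem : (v, θ v ⟨1, h1r⟩) ∈ subP θ m 0 0 1 := by
      refine ⟨v, hv, ?_⟩
      rw [hwi1 v 0 hrpos, hwi1 v 1 h1r, (hcan v).1]
    rw [hCeq] at hvmem
    obtain ⟨u, huS, hueq⟩ := hvmem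
    have hvu : v = θ u ⟨1, h1r⟩ := by
      have h := congrArg Prod.fst hueq
      simp only at h
      rw [h]
      rw [hwi2 u r hdra hmra]
      have hf1 : (⟨r / r, hdra⟩ : Fin r) = ⟨1, h1r⟩ := Fin.ext hdr
      have hf2 : (⟨r % r, hmra⟩ : Fin r) = ⟨0, hrpos⟩ := Fin.ext hmr0
      rw [hf1, hf2]
      exact (hcan _).1
    -- z(u) = 1 and the set is nonempty
    have huZmod : Int.ModEq (m : ℤ) (subZ θ m u : ℤ) (-(((m - 1 : ℕ)) : ℤ)) := huS
    have hneg1 : Int.ModEq (m : ℤ) (-(((m - 1 : ℕ)) : ℤ)) 1 := by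
      rw [Int.modEq_iff_dvd]
      refine ⟨1, ?_⟩
      omega
    have huZ1 : Int.ModEq (m : ℤ) (subZ θ m u : ℤ) 1 := huZmod.trans hneg1
    have hZune : {t : ℕ | ∃ h : t < r, θ u ⟨t, h⟩ = 0}.Nonempty := by
      by_contra hemp
      have hz0 : subZ θ m u = 0 := by
        unfold subZ
        rw [Set.not_nonempty_iff_eq_empty.mp hemp, Nat.sInf_empty, Nat.zero_mod]
      rw [hz0] at huZ1
      have h := huZ1.dvd
      simp only [Nat.cast_zero, sub_zero] at h
      have := Int.le_of_dvd one_pos h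
      omega
    have hu0mem := Nat.sInf_mem hZune
    obtain ⟨hu0r, hu0z⟩ := hu0mem
    set u0 := sInf {t : ℕ | ∃ h : t < r, θ u ⟨t, h⟩ = 0} with hu0def
    have hzu : subZ θ m u = u0 % m := rfl
    have hmod1 : u0 % m = 1 := by
      have h3 : Int.ModEq (m : ℤ) ((u0 % m : ℕ) : ℤ) 1 := by
        rw [← hzu]
        exact huZ1
      have h4 : (m : ℤ) ∣ 1 - ((u0 % m : ℕ) : ℤ) := h3.dvd
      have hb2 : ((u0 % m : ℕ) : ℤ) < m := by
        exact_mod_cast Nat.mod_lt _ (by omega : 0 < m)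
      have hb1 : (0 : ℤ) ≤ ((u0 % m : ℕ) : ℤ) := by positivity
      have h5 : 1 - ((u0 % m : ℕ) : ℤ) = 0 :=
        aux_int_eq_zero (by exact_mod_cast (by omega : 0 < m)) h4 (by omega) (by omega)
      omega
    have hu0pos : 1 ≤ u0 := by
      rcases Nat.eq_zero_or_pos u0 with h | h
      · rw [h] at hmod1
        simp at hmod1
      · exact h
    obtain ⟨nu, hnu⟩ := hocc u
    have hposz : xh ((r * nu + u0 : ℕ) : ℤ) = 0 := by
      have h := hfixθ (nu : ℤ) ⟨u0, hu0r⟩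
      rw [hnu] at h
      simp only [Fin.val_mk] at h
      rw [show ((r * nu + u0 : ℕ) : ℤ) = (r : ℤ) * nu + u0 by push_cast; ring, h]
      exact hu0z
    have hmdvd1 : (m : ℤ) ∣ (r : ℤ) * nu + u0 := by
      have hge : 1 ≤ r * nu + u0 := by omega
      have hdvd := hd1 _ hge hposz
      have h := Int.natCast_dvd_natCast.mpr (dvd_trans hmd hdvd)
      rwa [show ((r * nu + u0 : ℕ) : ℤ) = (r : ℤ) * nu + u0 by push_cast; ring] at h
    have hvocc : xh ((r * nu + 1 : ℕ) : ℤ) = v := by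
      have h := hfixθ (nu : ℤ) ⟨1, h1r⟩
      rw [hnu] at h
      simp only [Fin.val_mk, Nat.cast_one] at h
      rw [show ((r * nu + 1 : ℕ) : ℤ) = (r : ℤ) * nu + 1 by push_cast; ring, h]
      exact hvu.symm
    have hdiff := claimA v nn (r * nu + 1) hnn hvocc
    have hu01 : (m : ℤ) ∣ (u0 : ℤ) - 1 := by
      have h := Nat.div_add_mod u0 m
      refine ⟨((u0 / m : ℕ) : ℤ), ?_⟩
      have h2 : (m : ℤ) * ((u0 / m : ℕ) : ℤ) + ((u0 % m : ℕ) : ℤ) = (u0 : ℤ) := by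
        exact_mod_cast congrArg (Nat.cast : ℕ → ℤ) h
      rw [hmod1] at h2
      push_cast at h2 ⊢
      linarith
    have e : (nn : ℤ) = ((nn : ℤ) - ((r * nu + 1 : ℕ) : ℤ)) + ((r : ℤ) * nu + u0)
        - ((u0 : ℤ) - 1) := by
      push_cast
      ring
    rw [e]
    exact dvd_sub (dvd_add hdiff hmdvd1) hu01
  -- the distinguished class-0 pair
  have h0n : (⟨0, NeZero.pos n⟩ : Fin n) = 0 := rfl
  obtain ⟨ab0, hab0, hcab0⟩ := hq1 0
  have ha0S : ab0.2 ∈ subS θ m 0 := hq3 ab0 hab0 (by rw [h0n]; exact hcab0)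
  obtain ⟨n0, hn0⟩ := hocc ab0.2
  -- yφ k = c (xh (k-1), xh k) for k ≥ 1
  have hF : ∀ k : ℕ, 1 ≤ k → yφ ((k : ℕ) : ℤ) = c (xh ((k : ℤ) - 1), xh ((k : ℕ) : ℤ)) := by
    intro k hk
    set K := k + 1 with hKdef
    have hkK : k + 1 < r ^ K := by
      calc k + 1 < 2 ^ (k + 1) := Nat.lt_two_pow_self
        _ ≤ r ^ K := Nat.pow_le_pow_left hr K
    have hkK' : k < r ^ K := by omega
    have hk1K : k - 1 < r ^ K := by omega
    have hy1 : yφ ((k : ℕ) : ℤ) = wordIter φ K (0 : Fin n) k := by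
      have h := aux_expand φ yφ hfixφ K 0 k hkK'
      rw [hy0] at h
      rw [show (r : ℤ) ^ K * 0 + (k : ℤ) = (k : ℤ) by ring] at h
      exact h
    have hMC := aux_MC θ hcan xh hfixθ m c φ hq K 0 ab0 hab0 hcab0 (n0 : ℤ) hn0 k hk hkK'
    have e1 : xh ((r : ℤ) ^ K * n0 + (k : ℤ) - 1) = wordIter θ K ab0.2 (k - 1) := by
      have h := aux_expand θ xh hfixθ K (n0 : ℤ) (k - 1) hk1K
      rw [hn0] at h
      rw [← h]
      congr 1
      omega
    have e2 : xh ((r : ℤ) ^ K * n0 + (k : ℤ)) = wordIter θ K ab0.2 k := by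
      have h := aux_expand θ xh hfixθ K (n0 : ℤ) k hkK'
      rw [hn0] at h
      exact h
    have e3 : xh ((k : ℤ) - 1) = wordIter θ K (0 : Fin na) (k - 1) := by
      have h := aux_expand θ xh hfixθ K 0 (k - 1) hk1K
      rw [hx0] at h
      rw [← h]
      congr 1
      push_cast
      omega
    have e4 : xh ((k : ℕ) : ℤ) = wordIter θ K (0 : Fin na) k := by
      have h := aux_expand θ xh hfixθ K 0 k hkK'
      rw [hx0] at h
      rw [← h]
      congr 1
      ring
    have hsucc : k - 1 + 1 = k := by omega
    have hCcl : subP θ m 0 (k - 1) K ∈ subClasses θ m :=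
      ⟨0, hmpos, K, by omega, k - 1, by omega, rfl⟩
    have hmem1 : (xh ((r : ℤ) ^ K * n0 + (k : ℤ) - 1), xh ((r : ℤ) ^ K * n0 + (k : ℤ)))
        ∈ subP θ m 0 (k - 1) K := by
      refine ⟨ab0.2, ha0S, ?_⟩
      rw [hsucc, e1, e2]
    have hmem2 : (xh ((k : ℤ) - 1), xh ((k : ℕ) : ℤ)) ∈ subP θ m 0 (k - 1) K := by
      refine ⟨0, aux_zero_mem_S0 θ hcan m, ?_⟩
      rw [hsucc, e3, e4]
    have hleg1 : (xh ((r : ℤ) ^ K * n0 + (k : ℤ) - 1), xh ((r : ℤ) ^ K * n0 + (k : ℤ)))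
        ∈ legalPairs (orbitClosure xh) := by
      refine ⟨xh, self_mem_orbitClosure xh, (r : ℤ) ^ K * n0 + (k : ℤ) - 1, rfl, ?_⟩
      congr 1
      ring
    have hleg2 : (xh ((k : ℤ) - 1), xh ((k : ℕ) : ℤ)) ∈ legalPairs (orbitClosure xh) := by
      refine ⟨xh, self_mem_orbitClosure xh, (k : ℤ) - 1, rfl, ?_⟩
      congr 1
      ring
    have hceq := (hq2 _ hleg1 _ hleg2).mpr ⟨_, hCcl, hmem1, hmem2⟩
    rw [hy1, hMC, hceq]
  -- Direction I : m ∣ m'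
  have hI : ∀ k : ℕ, 1 ≤ k → yφ ((k : ℕ) : ℤ) = 0 → m ∣ k := by
    intro k hk hyk
    rcases Nat.lt_or_ge m 2 with hm1 | hm2
    · have : m = 1 := by omega
      rw [this]
      exact one_dvd _
    · have hck := hF k hk
      rw [hyk] at hck
      have hleg2 : (xh ((k : ℤ) - 1), xh ((k : ℕ) : ℤ)) ∈ legalPairs (orbitClosure xh) := by
        refine ⟨xh, self_mem_orbitClosure xh, (k : ℤ) - 1, rfl, ?_⟩
        congr 1
        ring
      have hS : xh ((k : ℕ) : ℤ) ∈ subS θ m 0 := hq3 _ hleg2 (by rw [h0n]; exact hck.symm)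
      have h := claimB hm2 _ hS k rfl
      exact_mod_cast h
  have hmd' : m ∣ d' := hd'2 m hI
  have hmm' : m ∣ m' := hm'max m hmd' hmr
  -- Direction II : m' ∣ m
  have hcover : ab0 ∈ ⋃₀ subClasses θ m := by
    rw [hA2]
    exact hab0
  obtain ⟨C, hCcl0, habC⟩ := hcover
  obtain ⟨i0, hi0, k0, hk0, j0, hj0, rfl⟩ := hCcl0
  obtain ⟨p0, hp0S, hp0eq⟩ := habC
  have hpk0 : 0 < r ^ k0 := pow_pos hrpos k0
  have hRL : ∀ s : ℕ, xh ((s : ℕ) : ℤ) = p0 →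
      yφ (((s * r ^ k0 + j0 + 1 : ℕ)) : ℤ) = 0 := by
    intro s hs
    set k := s * r ^ k0 + j0 + 1 with hkdef
    have hk1 : 1 ≤ k := by omega
    have h1 := hF k hk1
    have hj0K : j0 < r ^ k0 := by omega
    have hj1K : j0 + 1 < r ^ k0 := by omega
    have ex1 : xh ((k : ℤ) - 1) = wordIter θ k0 p0 j0 := by
      have h := aux_expand θ xh hfixθ k0 (s : ℤ) j0 hj0K
      rw [hs] at h
      rw [← h]
      congr 1
      rw [hkdef]
      push_cast
      ring
    have ex2 : xh ((k : ℕ) : ℤ) = wordIter θ k0 p0 (j0 + 1) := by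
      have h := aux_expand θ xh hfixθ k0 (s : ℤ) (j0 + 1) hj1K
      rw [hs] at h
      rw [← h]
      congr 1
      rw [hkdef]
      push_cast
      ring
    rw [h1, ex1, ex2, ← hp0eq, hcab0]
  obtain ⟨s1, hs1⟩ := hocc p0
  have hIId : ∀ nn : ℕ, 1 ≤ nn → xh ((nn : ℕ) : ℤ) = 0 → m' ∣ nn := by
    intro nn h1nn hxnn
    set T := s1 + 1 with hT
    have hsT : s1 < r ^ T := by
      calc s1 < 2 ^ s1 := Nat.lt_two_pow_self
        _ ≤ 2 ^ T := Nat.pow_le_pow_right (by norm_num) (by omega)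
        _ ≤ r ^ T := Nat.pow_le_pow_left hr T
    have hs2 : xh (((nn * r ^ T + s1 : ℕ)) : ℤ) = p0 := by
      have h := aux_expand θ xh hfixθ T (nn : ℤ) s1 hsT
      rw [hxnn] at h
      have h2 := aux_expand θ xh hfixθ T 0 s1 hsT
      rw [hx0] at h2
      rw [show (r : ℤ) ^ T * 0 + (s1 : ℤ) = (s1 : ℤ) by ring] at h2
      rw [show ((nn * r ^ T + s1 : ℕ) : ℤ) = (r : ℤ) ^ T * nn + s1 by push_cast; ring]
      rw [h, ← h2, hs1]
    have hr1 := hRL s1 hs1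
    have hr2 := hRL (nn * r ^ T + s1) hs2
    have hd'r1 := hd'1 _ (by omega) hr1
    have hd'r2 := hd'1 _ (by omega) hr2
    have hdiffd := Nat.dvd_sub hd'r2 hd'r1
    have heq : (nn * r ^ T + s1) * r ^ k0 + j0 + 1 - (s1 * r ^ k0 + j0 + 1)
        = nn * (r ^ T * r ^ k0) := by
      have h : (nn * r ^ T + s1) * r ^ k0 = nn * (r ^ T * r ^ k0) + s1 * r ^ k0 := by ring
      omega
    rw [heq] at hdiffd
    have hm'dvd : m' ∣ nn * (r ^ T * r ^ k0) := dvd_trans hm'd hdiffd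
    have hcop : Nat.Coprime m' (r ^ T * r ^ k0) := by
      rw [← pow_add]
      exact hm'r.pow_right _
    exact hcop.dvd_of_dvd_mul_right hm'dvd
  have hm'dd : m' ∣ d := hd2 m' hIId
  have hm'm : m' ∣ m := hmmax m' hm'dd hm'r
  exact Nat.dvd_antisymm hmm' hm'm
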